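/- The set GL(n,ℝ) × L₂(n) endowed with the operation (a,f)(a',f') = (a·a', f(a', I) + a ∘ f'(I, a⁻¹)) is a group, where f(a',I)(u,v) = f(a'(u), v) and (a ∘ f'(I,a⁻¹))(u,v) = a(f'(u, a⁻¹(v))). -/
import Mathlib


abbrev V (n : ℕ) : Type := Fin n → ℝ

/-- Bilinear maps `ℝ^n × ℝ^n → ℝ^n`. -/
abbrev L2 (n : ℕ) := V n →ₗ[ℝ] V n →ₗ[ℝ] V n

/-- `GL(n,ℝ)`, realized as the invertible linear endomorphisms of `ℝ^n`. -/
abbrev GLn (n : ℕ) := (V n →ₗ[ℝ] V n)ˣ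

/-- The multiplication `(a,f)(a',f') = (a·a', f(a',I) + a ∘ f'(I,a⁻¹))` of `T¹ₙL¹ₙ`,
where `f(a',I)(u,v) = f(a'(u), v)` and `(a ∘ f'(I,a⁻¹))(u,v) = a(f'(u, a⁻¹(v)))`. -/
noncomputable def tmul {n : ℕ} (p q : GLn n × L2 n) : GLn n × L2 n :=
  (p.1 * q.1,
    p.2.compl₁₂ (q.1 : V n →ₗ[ℝ] V n) LinearMap.id +
      (q.2.compl₁₂ LinearMap.id ((p.1⁻¹ : GLn n) : V n →ₗ[ℝ] V n)).compr₂
        (p.1 : V n →ₗ[ℝ] V n))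

lemma inv_app {n : ℕ} (a : GLn n) (v : V n) :
    ((a⁻¹ : GLn n) : V n →ₗ[ℝ] V n) ((a : V n →ₗ[ℝ] V n) v) = v := by
  calc ((a⁻¹ : GLn n) : V n →ₗ[ℝ] V n) ((a : V n →ₗ[ℝ] V n) v)
      = ((↑a⁻¹ * ↑a : V n →ₗ[ℝ] V n)) v := rfl
    _ = v := by rw [a.inv_mul]; rfl

lemma app_inv {n : ℕ} (a : GLn n) (v : V n) :
    (a : V n →ₗ[ℝ] V n) (((a⁻¹ : GLn n) : V n →ₗ[ℝ] V n) v) = v := by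
  calc (a : V n →ₗ[ℝ] V n) (((a⁻¹ : GLn n) : V n →ₗ[ℝ] V n) v)
      = ((↑a * ↑a⁻¹ : V n →ₗ[ℝ] V n)) v := rfl
    _ = v := by rw [a.mul_inv]; rfl

/-- `T¹ₙL¹ₙ = GL(n,ℝ) × L₂(n)` with the operation `tmul` is a group. -/
theorem T1nL1n_is_group (n : ℕ) :
    (∀ p q r : GLn n × L2 n, tmul (tmul p q) r = tmul p (tmul q r)) ∧
    (∀ p : GLn n × L2 n, tmul ((1 : GLn n), (0 : L2 n)) p = p ∧
      tmul p ((1 : GLn n), (0 : L2 n)) = p) ∧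
    (∀ p : GLn n × L2 n, ∃ q : GLn n × L2 n,
      tmul p q = ((1 : GLn n), (0 : L2 n)) ∧ tmul q p = ((1 : GLn n), (0 : L2 n))) := by
  refine ⟨?_, ?_, ?_⟩
  · intro p q r
    refine Prod.ext (mul_assoc _ _ _) ?_
    ext u v
    simp [tmul, mul_inv_rev, inv_app, add_assoc]
  · intro p
    constructor <;> refine Prod.ext (by simp [tmul]) ?_ <;> ext u v <;> simp [tmul]
  · intro p
    refine ⟨(p.1⁻¹, -((p.2.compl₁₂ ((p.1⁻¹ : GLn n) : V n →ₗ[ℝ] V n)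
        (p.1 : V n →ₗ[ℝ] V n)).compr₂ ((p.1⁻¹ : GLn n) : V n →ₗ[ℝ] V n))), ?_, ?_⟩ <;>
      refine Prod.ext (by simp [tmul]) ?_ <;> ext u v <;>
      simp [tmul, inv_app, app_inv]
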